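/- For every s > 0, 1/(s + K_{n=1}^∞ (n²/s)) = ∫_0^∞ e^{−sx}/cosh x dx, where s + K_{n=1}^∞ (n²/s) denotes the limit of the convergents of the generalized continued fraction with integer part s, partial numerators a_n = n² and partial denominators b_n = s. -/

import Mathlib

open Filter Real

/-- Numerators of the convergents of a generalized continued fraction with
integer part `b₀`, partial numerators `a n` and partial denominators `b n` (for `n ≥ 1`). -/
noncomputable def cfNum (b₀ : ℝ) (a b : ℕ → ℝ) : ℕ → ℝ
  | 0 => b₀
  | 1 => b 1 * b₀ + a 1
  | n + 2 => b (n + 2) * cfNum b₀ a b (n + 1) + a (n + 2) * cfNum b₀ a b n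

/-- Denominators of the convergents of a generalized continued fraction. -/
noncomputable def cfDen (a b : ℕ → ℝ) : ℕ → ℝ
  | 0 => 1
  | 1 => b 1
  | n + 2 => b (n + 2) * cfDen a b (n + 1) + a (n + 2) * cfDen a b n

/-- `IsCFLimit b₀ a b L` means: the convergents of the generalized continued fraction
`b₀ + a 1 / (b 1 + a 2 / (b 2 + ⋯))` tend to `L`. -/
def IsCFLimit (b₀ : ℝ) (a b : ℕ → ℝ) (L : ℝ) : Prop :=
  Filter.Tendsto (fun n => cfNum b₀ a b n / cfDen a b n) Filter.atTop (nhds L)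

section EulerAux

open MeasureTheory Set

/-- The integrand of the moments `eulerI`. -/
noncomputable def eulerG (s : ℝ) (n : ℕ) (x : ℝ) : ℝ :=
  Real.exp (-s * x) * Real.sinh x ^ n / Real.cosh x ^ (n + 1)

lemma eulerG_cont (s : ℝ) (n : ℕ) : Continuous (eulerG s n) := by
  unfold eulerG
  fun_prop (disch := intro x; positivity)

lemma eulerG_nonneg (s : ℝ) {n : ℕ} {x : ℝ} (hx : 0 ≤ x) : 0 ≤ eulerG s n x := by
  unfold eulerG
  have h := Real.sinh_nonneg_iff.2 hx
  positivity

lemma eulerG_le (s : ℝ) {n : ℕ} {x : ℝ} (hx : 0 ≤ x) :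
    eulerG s n x ≤ Real.exp (-s * x) := by
  unfold eulerG
  rw [div_le_iff₀ (by positivity)]
  have h0 := Real.sinh_nonneg_iff.2 hx
  have h1 : Real.sinh x ^ n ≤ Real.cosh x ^ n :=
    pow_le_pow_left₀ h0 (Real.sinh_lt_cosh x).le n
  have h2 : (1:ℝ) ≤ Real.cosh x := Real.one_le_cosh x
  have h3 : (0:ℝ) < Real.exp (-s*x) := Real.exp_pos _
  calc Real.exp (-s*x) * Real.sinh x ^ n ≤ Real.exp (-s*x) * Real.cosh x ^ n := by gcongr
    _ ≤ Real.exp (-s*x) * (Real.cosh x ^ n * Real.cosh x) := by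
        have h4 : (0:ℝ) < Real.cosh x ^ n := pow_pos (Real.cosh_pos x) n
        exact mul_le_mul_of_nonneg_left (by nlinarith) h3.le
    _ = Real.exp (-s*x) * Real.cosh x ^ (n+1) := by ring

lemma eulerG_integrable {s : ℝ} (hs : 0 < s) (n : ℕ) :
    IntegrableOn (eulerG s n) (Ioi (0:ℝ)) := by
  apply Integrable.mono (exp_neg_integrableOn_Ioi 0 hs)
    ((eulerG_cont s n).aestronglyMeasurable.restrict)
  filter_upwards [ae_restrict_mem measurableSet_Ioi] with x hx
  rw [Real.norm_eq_abs, Real.norm_eq_abs, abs_of_nonneg (eulerG_nonneg s hx.le),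
    abs_of_nonneg (Real.exp_pos _).le]
  exact eulerG_le s hx.le

/-- The moments `∫ e^{-sx} tanhⁿ x sech x dx`. -/
noncomputable def eulerI (s : ℝ) (n : ℕ) : ℝ := ∫ x in Ioi (0:ℝ), eulerG s n x

lemma eulerI_pos {s : ℝ} (hs : 0 < s) (n : ℕ) : 0 < eulerI s n := by
  rw [eulerI, setIntegral_pos_iff_support_of_nonneg_ae]
  · refine lt_of_lt_of_le ?_
      (measure_mono (?_ : Ioi (1:ℝ) ⊆ Function.support (eulerG s n) ∩ Ioi 0))
    · rw [Real.volume_Ioi]; exact ENNReal.zero_lt_top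
    · intro x hx
      have hx1 : (0:ℝ) < x := lt_trans one_pos hx
      constructor
      · rw [Function.mem_support]
        have hsinh := Real.sinh_pos_iff.2 hx1
        have : 0 < eulerG s n x := by
          unfold eulerG; positivity
        exact this.ne'
      · exact hx1
  · filter_upwards [ae_restrict_mem measurableSet_Ioi] with x hx
    exact eulerG_nonneg s hx.le
  · exact eulerG_integrable hs n

lemma eulerG_hasDerivAt (s : ℝ) (n : ℕ) (x : ℝ) :
    HasDerivAt (eulerG s n)
      (-s * eulerG s n x + n * eulerG s (n-1) x - (n+1) * eulerG s (n+1) x) x := by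
  have hc : Real.cosh x ≠ 0 := (Real.cosh_pos x).ne'
  have hcp : Real.cosh x ^ (n+1) ≠ 0 := pow_ne_zero _ hc
  have he : HasDerivAt (fun x => Real.exp (-s * x)) (-s * Real.exp (-s * x)) x := by
    simpa [mul_comm] using (HasDerivAt.exp ((hasDerivAt_id x).const_mul (-s)))
  have hsinh : HasDerivAt (fun x => Real.sinh x ^ n)
      (n * Real.sinh x ^ (n-1) * Real.cosh x) x := (Real.hasDerivAt_sinh x).pow n
  have hcosh : HasDerivAt (fun x => Real.cosh x ^ (n+1))
      ((n+1) * Real.cosh x ^ n * Real.sinh x) x := by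
    simpa using (Real.hasDerivAt_cosh x).fun_pow (n+1)
  have h := ((he.mul hsinh).div hcosh hcp)
  refine HasDerivAt.congr_deriv h ?_
  symm
  unfold eulerG
  simp only [Pi.mul_apply]
  rcases Nat.eq_zero_or_pos n with rfl | hn
  · field_simp
    ring
  · obtain ⟨m, rfl⟩ := Nat.exists_eq_add_of_le hn
    push_cast
    simp only [Nat.add_sub_cancel_left, Nat.add_sub_cancel]
    field_simp
    ring

lemma eulerG_tendsto {s : ℝ} (hs : 0 < s) (n : ℕ) :
    Tendsto (eulerG s n) atTop (nhds 0) := by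
  apply squeeze_zero' (Eventually.mono (eventually_ge_atTop 0) (fun x hx => eulerG_nonneg s hx))
    (Eventually.mono (eventually_ge_atTop 0) (fun x hx => eulerG_le s hx))
  have h1 : Tendsto (fun x : ℝ => s * x) atTop atTop :=
    Tendsto.const_mul_atTop hs tendsto_id
  have h2 := Real.tendsto_exp_neg_atTop_nhds_zero.comp h1
  have h3 : (fun x : ℝ => Real.exp (-s * x)) = (fun x => Real.exp (-x)) ∘ fun x => s * x := by
    funext x; simp [Function.comp, neg_mul]
  rw [h3]; exact h2

lemma eulerI_fund {s : ℝ} (hs : 0 < s) (n : ℕ) :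
    -s * eulerI s n + n * eulerI s (n-1) - (n+1) * eulerI s (n+1) = -eulerG s n 0 := by
  have hint : IntegrableOn (fun x => -s * eulerG s n x + n * eulerG s (n-1) x
      - (n+1) * eulerG s (n+1) x) (Ioi (0:ℝ)) :=
    (((eulerG_integrable hs n).const_mul (-s)).add
      ((eulerG_integrable hs (n-1)).const_mul n)).sub
      ((eulerG_integrable hs (n+1)).const_mul (n+1))
  have key := integral_Ioi_of_hasDerivAt_of_tendsto
    ((eulerG_cont s n).continuousWithinAt)
    (fun x _ => eulerG_hasDerivAt s n x) hint (eulerG_tendsto hs n)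
  rw [zero_sub] at key
  have i1 : IntegrableOn (fun x => -s * eulerG s n x) (Ioi (0:ℝ)) :=
    (eulerG_integrable hs n).const_mul (-s)
  have i2 : IntegrableOn (fun x => (n:ℝ) * eulerG s (n-1) x) (Ioi (0:ℝ)) :=
    (eulerG_integrable hs (n-1)).const_mul n
  have i3 : IntegrableOn (fun x => ((n:ℝ)+1) * eulerG s (n+1) x) (Ioi (0:ℝ)) :=
    (eulerG_integrable hs (n+1)).const_mul ((n:ℝ)+1)
  have i12 : IntegrableOn (fun x => -s * eulerG s n x + (n:ℝ) * eulerG s (n-1) x)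
      (Ioi (0:ℝ)) := i1.add i2
  rw [← key, integral_sub i12 i3, integral_add i1 i2, integral_const_mul,
    integral_const_mul, integral_const_mul]
  rfl

lemma eulerI_rec0 {s : ℝ} (hs : 0 < s) : s * eulerI s 0 + eulerI s 1 = 1 := by
  have h := eulerI_fund hs 0
  have h0 : eulerG s 0 0 = 1 := by simp [eulerG]
  rw [h0] at h
  push_cast at h
  linarith

lemma eulerI_recS {s : ℝ} (hs : 0 < s) (n : ℕ) :
    s * eulerI s (n+1) = (n+1) * eulerI s n - (n+2) * eulerI s (n+2) := by
  have h := eulerI_fund hs (n+1)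
  have h0 : eulerG s (n+1) 0 = 0 := by simp [eulerG]
  rw [h0] at h
  simp only [Nat.add_sub_cancel] at h
  push_cast at h
  linarith

lemma eulerI_int (s : ℝ) :
    eulerI s 0 = ∫ x in Set.Ioi (0:ℝ), Real.exp (-s * x) / Real.cosh x := by
  unfold eulerI eulerG
  norm_num

lemma cfDen_pos {s : ℝ} (hs : 0 < s) (n : ℕ) :
    0 < cfDen (fun n => (n : ℝ) ^ 2) (fun _ => s) n := by
  set Q := cfDen (fun n => (n : ℝ) ^ 2) (fun _ => s) with hQ
  have key : ∀ m, 0 < Q m ∧ 0 < Q (m+1) := by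
    intro m
    induction m with
    | zero => exact ⟨by rw [hQ]; norm_num [cfDen], by rw [hQ]; simpa [cfDen] using hs⟩
    | succ k ih =>
      refine ⟨ih.2, ?_⟩
      have h2 : Q (k+2) = s * Q (k+1) + ((k+2 : ℕ) : ℝ)^2 * Q k := by
        rw [hQ]; rfl
      rw [h2]
      have : (0:ℝ) < ((k+2 : ℕ) : ℝ)^2 := by positivity
      nlinarith [ih.1, ih.2]
  exact (key n).1

lemma cfKeyP {s : ℝ} (hs : 0 < s) (n : ℕ) :
    cfNum s (fun n => (n : ℝ) ^ 2) (fun _ => s) (n+1) * eulerI s (n+1)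
      + ((n:ℝ) + 2) * eulerI s (n+2) * cfNum s (fun n => (n : ℝ) ^ 2) (fun _ => s) n
      = (Nat.factorial (n+1) : ℝ) := by
  set P := cfNum s (fun n => (n : ℝ) ^ 2) (fun _ => s) with hP
  induction n with
  | zero =>
    have h0 := eulerI_rec0 hs
    have h1 := eulerI_recS hs 0
    have e1 : P 1 = s * s + 1 := by rw [hP]; norm_num [cfNum]
    have e0 : P 0 = s := by rw [hP]; rfl
    rw [e1, e0]
    push_cast at h1 ⊢
    norm_num at h1 ⊢
    linear_combination s * h1 + h0
  | succ k ih =>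
    have hrec : P (k+2) = s * P (k+1) + ((k+2 : ℕ) : ℝ)^2 * P k := by rw [hP]; rfl
    have h1 := eulerI_recS hs (k+1)
    have hfact : (Nat.factorial (k+2) : ℝ) = ((k:ℝ)+2) * (Nat.factorial (k+1) : ℝ) := by
      rw [Nat.factorial_succ]; push_cast; ring
    rw [hrec, hfact]
    push_cast at h1 ⊢
    linear_combination P (k+1) * h1 + ((k:ℝ)+2) * ih

lemma cfKeyQ {s : ℝ} (hs : 0 < s) (n : ℕ) :
    cfDen (fun n => (n : ℝ) ^ 2) (fun _ => s) (n+1) * eulerI s (n+1)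
      + ((n:ℝ) + 2) * eulerI s (n+2) * cfDen (fun n => (n : ℝ) ^ 2) (fun _ => s) n
      = (Nat.factorial (n+1) : ℝ) * eulerI s 0 := by
  set Q := cfDen (fun n => (n : ℝ) ^ 2) (fun _ => s) with hQ
  induction n with
  | zero =>
    have h1 := eulerI_recS hs 0
    have e1 : Q 1 = s := by rw [hQ]; rfl
    have e0 : Q 0 = 1 := by rw [hQ]; rfl
    rw [e1, e0]
    push_cast at h1 ⊢
    norm_num at h1 ⊢
    linear_combination h1
  | succ k ih =>
    have hrec : Q (k+2) = s * Q (k+1) + ((k+2 : ℕ) : ℝ)^2 * Q k := by rw [hQ]; rfl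
    have h1 := eulerI_recS hs (k+1)
    have hfact : (Nat.factorial (k+2) : ℝ) = ((k:ℝ)+2) * (Nat.factorial (k+1) : ℝ) := by
      rw [Nat.factorial_succ]; push_cast; ring
    rw [hrec, hfact]
    push_cast at h1 ⊢
    linear_combination Q (k+1) * h1 + ((k:ℝ)+2) * ih

end EulerAux

theorem euler_integral_formula_exp (s : ℝ) (hs : 0 < s) (L : ℝ)
    (hL : IsCFLimit s (fun n => (n : ℝ) ^ 2) (fun _ => s) L) :
    1 / L = ∫ x in Set.Ioi (0 : ℝ), Real.exp (-s * x) / Real.cosh x := by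
  set P := cfNum s (fun n => (n : ℝ) ^ 2) (fun _ => s) with hPdef
  set Q := cfDen (fun n => (n : ℝ) ^ 2) (fun _ => s) with hQdef
  set c : ℕ → ℝ := fun n => P n / Q n with hcdef
  have hI0 : 0 < eulerI s 0 := eulerI_pos hs 0
  have hmain : 1 / eulerI s 0 = L := by
    have habs : ∀ ε > 0, |1 / eulerI s 0 - L| ≤ ε := by
      intro ε hε
      obtain ⟨N, hN⟩ := Metric.tendsto_atTop.mp hL ε hε
      have hc0 : |c N - L| ≤ ε := by
        have := hN N le_rfl; rw [Real.dist_eq] at this; exact this.le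
      have hc1 : |c (N+1) - L| ≤ ε := by
        have := hN (N+1) (Nat.le_succ N); rw [Real.dist_eq] at this; exact this.le
      set lam := Q (N+1) * eulerI s (N+1) with hlam
      set mu := ((N:ℝ) + 2) * eulerI s (N+2) * Q N with hmu
      have hlampos : 0 < lam := mul_pos (cfDen_pos hs (N+1)) (eulerI_pos hs (N+1))
      have hmupos : 0 < mu := by
        apply mul_pos (mul_pos (by positivity) (eulerI_pos hs (N+2))) (cfDen_pos hs N)
      have hQ1 : Q (N+1) ≠ 0 := (cfDen_pos hs (N+1)).ne'
      have hQ0 : Q N ≠ 0 := (cfDen_pos hs N).ne'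
      have h1 : lam * c (N+1) = P (N+1) * eulerI s (N+1) := by
        rw [hlam, hcdef]; field_simp
      have h2 : mu * c N = ((N:ℝ) + 2) * eulerI s (N+2) * P N := by
        rw [hmu, hcdef]; field_simp
      have hkQ : lam + mu = (Nat.factorial (N+1) : ℝ) * eulerI s 0 := cfKeyQ hs N
      have hkP := cfKeyP hs N
      have hthis : (1 / eulerI s 0) * (lam + mu) = (Nat.factorial (N+1) : ℝ) := by
        rw [hkQ]; field_simp
      have hid : (1 / eulerI s 0 - L) * (lam + mu)
          = lam * (c (N+1) - L) + mu * (c N - L) := by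
        linear_combination hthis - h1 - h2 - hkP
      have hsum : 0 < lam + mu := by linarith
      have hbound : |1 / eulerI s 0 - L| * (lam + mu) ≤ ε * (lam + mu) := by
        calc |1 / eulerI s 0 - L| * (lam + mu)
            = |(1 / eulerI s 0 - L) * (lam + mu)| := by
              rw [abs_mul, abs_of_pos hsum]
          _ = |lam * (c (N+1) - L) + mu * (c N - L)| := by rw [hid]
          _ ≤ |lam * (c (N+1) - L)| + |mu * (c N - L)| := abs_add_le _ _
          _ = lam * |c (N+1) - L| + mu * |c N - L| := by
              have e1 : |lam * (c (N+1) - L)| = lam * |c (N+1) - L| := by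
                rw [abs_mul]; congr 1; exact abs_of_pos hlampos
              have e2 : |mu * (c N - L)| = mu * |c N - L| := by
                rw [abs_mul]; congr 1; exact abs_of_pos hmupos
              rw [e1, e2]
          _ ≤ lam * ε + mu * ε := by
              gcongr
          _ = ε * (lam + mu) := by ring
      exact le_of_mul_le_mul_right (by linarith [hbound]) hsum
    have h0 : |1 / eulerI s 0 - L| ≤ 0 := by
      refine le_of_forall_pos_le_add (fun ε hε => ?_)
      simpa using habs ε hε
    have := abs_nonpos_iff.mp h0
    linarith [sub_eq_zero.mp this]
  rw [← hmain, one_div_one_div, eulerI_int]
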